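/- Let K be a convex body in ℝ^n, L a supporting hyperplane of K at a regular boundary point x (i.e., x has a unique outer normal a, and L = {y : ⟨a,y⟩ = ⟨a,x⟩}). Then for every point p in the open halfspace {y : ⟨a,y⟩ < ⟨a,x⟩}, there exists λ > 0 such that the homothety x + λ(K - x) contains p. -/

import Mathlib

local notation "⟪" x ", " y "⟫_ℝ" => @inner ℝ _ _ x y

theorem stmt7 {n : ℕ} (K : Set (EuclideanSpace ℝ (Fin n)))
    (hKcomp : IsCompact K) (hKconv : Convex ℝ K) (hKint : (interior K).Nonempty)
    (x : EuclideanSpace ℝ (Fin n)) (hx : x ∈ frontier K)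
    (a : EuclideanSpace ℝ (Fin n)) (ha : ‖a‖ = 1)
    (hsupp : ∀ y ∈ K, ⟪a, y⟫_ℝ ≤ ⟪a, x⟫_ℝ)
    (hreg : ∀ a' : EuclideanSpace ℝ (Fin n), ‖a'‖ = 1 →
      (∀ y ∈ K, ⟪a', y⟫_ℝ ≤ ⟪a', x⟫_ℝ) → a' = a) :
    ∀ p : EuclideanSpace ℝ (Fin n), ⟪a, p⟫_ℝ < ⟪a, x⟫_ℝ →
      ∃ lam : ℝ, 0 < lam ∧ p ∈ (fun y => x + lam • (y - x)) '' K := by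
  intro p hp
  have hxK : x ∈ K := hKcomp.isClosed.closure_eq ▸ frontier_subset_closure hx
  set s : Set (EuclideanSpace ℝ (Fin n)) := (fun y => y - x) '' K with hs_def
  have hs : Convex ℝ s := by
    have := hKconv.translate (-x)
    convert this using 1
    · rfl
    rw [hs_def]
    congr 1
    funext y
    abel
  set C : Set (EuclideanSpace ℝ (Fin n)) := ((hs.toCone s : ConvexCone ℝ (EuclideanSpace ℝ (Fin n))) : Set (EuclideanSpace ℝ (Fin n))) with hC_def
  have hCconv : Convex ℝ C := (hs.toCone s).convex
  have hsC : s ⊆ C := hs.subset_toCone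
  have h0C : (0 : EuclideanSpace ℝ (Fin n)) ∈ C := hsC ⟨x, hxK, by simp⟩
  have hsmul : ∀ (t : ℝ), 0 < t → ∀ w ∈ C, t • w ∈ C := fun t ht w hw =>
    (hs.toCone s).smul_mem ht hw
  -- Claim: every w with ⟪a, w⟫ < 0 lies in the closure of C
  have hclaim : ∀ w : EuclideanSpace ℝ (Fin n), ⟪a, w⟫_ℝ < 0 → w ∈ closure C := by
    intro w hw
    by_contra hwC
    obtain ⟨f, u, hfC, hfw⟩ :=
      geometric_hahn_banach_closed_point hCconv.closure isClosed_closure hwC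
    have hu : 0 < u := by simpa using hfC 0 (subset_closure h0C)
    have hfle : ∀ z ∈ C, f z ≤ 0 := by
      intro z hz
      by_contra hpos
      push_neg at hpos
      have ht : (0 : ℝ) < 2 * u / f z := by positivity
      have := hfC ((2 * u / f z) • z) (subset_closure (hsmul _ ht z hz))
      rw [map_smul, smul_eq_mul, div_mul_cancel₀ _ (ne_of_gt hpos)] at this
      linarith
    set b : EuclideanSpace ℝ (Fin n) := (InnerProductSpace.toDual ℝ _).symm f with hb_def
    have hbf : ∀ y, ⟪b, y⟫_ℝ = f y := by
      intro y
      rw [hb_def]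
      exact InnerProductSpace.toDual_symm_apply
    have hfw0 : 0 < f w := lt_trans hu hfw
    have hbne : b ≠ 0 := by
      intro h
      rw [← hbf w, h, inner_zero_left] at hfw0
      exact lt_irrefl 0 hfw0
    have hbnorm : (0:ℝ) < ‖b‖ := norm_pos_iff.2 hbne
    have ha' : (‖b‖⁻¹ • b) = a := by
      apply hreg
      · rw [norm_smul, norm_inv, norm_norm, inv_mul_cancel₀ (ne_of_gt hbnorm)]
      · intro y hy
        have : f (y - x) ≤ 0 := hfle _ (hsC ⟨y, hy, rfl⟩)
        rw [← hbf] at this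
        rw [inner_sub_right] at this
        have hby : ⟪b, y⟫_ℝ ≤ ⟪b, x⟫_ℝ := by linarith
        rw [real_inner_smul_left, real_inner_smul_left]
        exact mul_le_mul_of_nonneg_left hby (by positivity)
    have : ⟪a, w⟫_ℝ = ‖b‖⁻¹ * f w := by
      rw [← ha', real_inner_smul_left, hbf]
    nlinarith [mul_pos (inv_pos.2 hbnorm) hfw0]
  -- interior point of C
  obtain ⟨z, hz⟩ := hKint
  have hz0 : z - x ∈ interior C := by
    have hopen : IsOpen ((fun w => w + x) ⁻¹' (interior K)) :=
      isOpen_interior.preimage (continuous_id.add continuous_const)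
    have hsub : ((fun w => w + x) ⁻¹' (interior K)) ⊆ C := by
      intro w hw
      exact hsC ⟨w + x, interior_subset hw, by simp⟩
    exact interior_maximal hsub hopen (by simpa using hz)
  set v : EuclideanSpace ℝ (Fin n) := p - x with hv_def
  have hva : ⟪a, v⟫_ℝ < 0 := by
    rw [hv_def, inner_sub_right]; linarith
  -- choose small ε and the point w on the far side of v from z0
  set z0 := z - x with hz0_def
  set c := ⟪a, v⟫_ℝ with hc_def
  set d := ⟪a, z0⟫_ℝ with hd_def
  have hcd : (0:ℝ) < 2 * (|c| + |d| + 1) := by positivity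
  set ε : ℝ := min 1 (-c / (2 * (|c| + |d| + 1))) with hε_def
  have hεpos : 0 < ε := lt_min one_pos (div_pos (by linarith) hcd)
  have hεle : ε ≤ -c / (2 * (|c| + |d| + 1)) := min_le_right _ _
  have hεbound : ε * (|c| + |d|) ≤ -c / 2 := by
    rw [le_div_iff₀ hcd] at hεle
    nlinarith [hεpos, abs_nonneg c, abs_nonneg d]
  set w : EuclideanSpace ℝ (Fin n) := v + ε • (v - z0) with hw_def
  have hwa : ⟪a, w⟫_ℝ < 0 := by
    have hexp : ⟪a, w⟫_ℝ = c + ε * (c - d) := by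
      simp only [hw_def, hc_def, hd_def, inner_add_right, inner_sub_right,
        real_inner_smul_right]
    rw [hexp]
    have h1 : ε * (c - d) ≤ ε * (|c| + |d|) := by
      apply mul_le_mul_of_nonneg_left _ (le_of_lt hεpos)
      cases' abs_cases c with h h <;> cases' abs_cases d with h' h' <;> linarith
    linarith
  have hwcl : w ∈ closure C := hclaim w hwa
  have hvC : v ∈ C := by
    have hcomb : (1 / (1 + ε)) • w + (ε / (1 + ε)) • z0 = v := by
      have h1ε : (1:ℝ) + ε ≠ 0 := by positivity
      rw [hw_def]
      match_scalars <;> field_simp <;> ring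
    have := hCconv.combo_closure_interior_mem_interior hwcl hz0
      (a := 1 / (1 + ε)) (b := ε / (1 + ε)) (by positivity) (by positivity)
      (by have h1ε : (1:ℝ) + ε ≠ 0 := by positivity
          rw [← add_div, div_self h1ε])
    rw [hcomb] at this
    exact interior_subset this
  obtain ⟨t, ht, y, hy, hty⟩ := hs.mem_toCone.1 hvC
  obtain ⟨k, hk, hky⟩ := hy
  have hky' : k - x = y := hky
  refine ⟨t, ht, k, hk, ?_⟩
  show x + t • (k - x) = p
  rw [hky', hty, hv_def]
  abel
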